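/- The Cayley transformation C(x) = (e_{n+1}x + 1)(x + e_{n+1})^{-1} maps R^n = span(e_1,...,e_n) bijectively onto S^n \ {e_{n+1}}, with inverse x_s ↦ (-e_{n+1} x_s + 1)(x_s - e_{n+1})^{-1}; in particular ‖C(x)‖ = 1 for all x ∈ R^n and C(C^{-1}(x_s)) = x_s for all x_s ∈ S^n \ {e_{n+1}}. -/

import Mathlib

open CliffordAlgebra RealInnerProductSpace

noncomputable def Qneg (n : ℕ) : QuadraticForm ℝ (EuclideanSpace ℝ (Fin (n+1))) :=
  - (LinearMap.BilinMap.toQuadraticMap (innerₗ (EuclideanSpace ℝ (Fin (n+1)))))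

noncomputable abbrev Cl (n : ℕ) := CliffordAlgebra (Qneg n)

/-- The embedding of `ℝ^n = span(e_1, …, e_n)` into `ℝ^{n+1}`. -/
noncomputable def emb (n : ℕ) (x : EuclideanSpace ℝ (Fin n)) :
    EuclideanSpace ℝ (Fin (n+1)) :=
  ∑ i : Fin n, x i • EuclideanSpace.single i.castSucc (1 : ℝ)

/-- The unit vector `e_{n+1}` orthogonal to `ℝ^n`. -/
noncomputable def en1 (n : ℕ) : EuclideanSpace ℝ (Fin (n+1)) :=
  EuclideanSpace.single (Fin.last n) 1

/-- The inverse `v⁻¹ = -v/‖v‖²` of a nonzero vector `v` in `Cl_{n+1}`. -/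
noncomputable def vecInv (n : ℕ) (v : EuclideanSpace ℝ (Fin (n+1))) : Cl n :=
  (-(‖v‖^2)⁻¹) • ι (Qneg n) v

/-- The Cayley transformation `C(x) = e_{n+1} + 2(x + e_{n+1})⁻¹` as a vector in `ℝ^{n+1}`. -/
noncomputable def cayley (n : ℕ) (x : EuclideanSpace ℝ (Fin n)) :
    EuclideanSpace ℝ (Fin (n+1)) :=
  en1 n - (2 * (‖emb n x + en1 n‖^2)⁻¹) • (emb n x + en1 n)

/-- The inverse Cayley transformation `C⁻¹(x_s) = -e_{n+1} + 2(x_s - e_{n+1})⁻¹` as a vector. -/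
noncomputable def cayleyInv (n : ℕ) (xs : EuclideanSpace ℝ (Fin (n+1))) :
    EuclideanSpace ℝ (Fin (n+1)) :=
  -en1 n - (2 * (‖xs - en1 n‖^2)⁻¹) • (xs - en1 n)


lemma Qneg_apply (n : ℕ) (v : EuclideanSpace ℝ (Fin (n+1))) : Qneg n v = -‖v‖^2 := by
  rw [Qneg, QuadraticMap.neg_apply, LinearMap.BilinMap.toQuadraticMap_apply]
  exact congrArg Neg.neg (real_inner_self_eq_norm_sq v)

lemma iota_sq (n : ℕ) (v : EuclideanSpace ℝ (Fin (n+1))) :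
    ι (Qneg n) v * ι (Qneg n) v = algebraMap ℝ (Cl n) (-‖v‖^2) := by
  rw [ι_sq_scalar, Qneg_apply]

lemma cayley_formula_gen (n : ℕ) (e m : EuclideanSpace ℝ (Fin (n+1)))
    (he : ‖e‖ = 1) (hc : ‖m + e‖^2 ≠ 0) :
    ι (Qneg n) (e - (2 * (‖m + e‖^2)⁻¹) • (m + e)) =
      (ι (Qneg n) e * ι (Qneg n) m + 1) * ((-(‖m + e‖^2)⁻¹) • ι (Qneg n) (m + e)) := by
  set c := ‖m + e‖^2 with hcdef
  have hee : ι (Qneg n) e * ι (Qneg n) e = algebraMap ℝ (Cl n) (-1) := by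
    rw [iota_sq, he]; norm_num
  have huu : ι (Qneg n) (m + e) * ι (Qneg n) (m + e) = algebraMap ℝ (Cl n) (-c) := iota_sq n _
  have hm : ι (Qneg n) m = ι (Qneg n) (m + e) - ι (Qneg n) e := by
    rw [← map_sub]; congr 1; abel
  rw [map_sub, map_smul, hm]
  set A := ι (Qneg n) e
  set B := ι (Qneg n) (m + e)
  have expand : (A * (B - A) + 1) * B = (-c) • A + (B + B) := by
    have h : (A * (B - A) + 1) * B = A * (B * B) - (A * A) * B + B := by noncomm_ring
    rw [h, huu, hee, ← Algebra.commutes, ← Algebra.smul_def, ← Algebra.smul_def,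
      neg_one_smul]
    abel
  rw [mul_smul_comm, expand]
  match_scalars <;> (field_simp; try ring)

lemma emb_apply (n : ℕ) (x : EuclideanSpace ℝ (Fin n)) (j : Fin (n+1)) :
    emb n x j = ∑ i : Fin n, x i * (if j = Fin.castSucc i then 1 else 0) := by
  have h0 : emb n x j = EuclideanSpace.projₗ (𝕜 := ℝ) j (emb n x) := rfl
  rw [h0, emb, map_sum]
  refine Finset.sum_congr rfl fun i _ => ?_
  rw [map_smul, smul_eq_mul]
  congr 1
  rw [PiLp.projₗ_apply]
  exact EuclideanSpace.single_apply _ _ _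

lemma emb_apply_castSucc (n : ℕ) (x : EuclideanSpace ℝ (Fin n)) (i : Fin n) :
    emb n x (Fin.castSucc i) = x i := by
  rw [emb_apply]
  simp [Fin.castSucc_inj]

lemma emb_apply_last (n : ℕ) (x : EuclideanSpace ℝ (Fin n)) :
    emb n x (Fin.last n) = 0 := by
  rw [emb_apply]
  apply Finset.sum_eq_zero
  intro i _
  simp [(Fin.castSucc_lt_last i).ne']

lemma norm_en1 (n : ℕ) : ‖en1 n‖ = 1 := by simp [en1]

lemma inner_en1 (n : ℕ) (v : EuclideanSpace ℝ (Fin (n+1))) :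
    ⟪v, en1 n⟫ = v (Fin.last n) := by
  rw [en1, EuclideanSpace.inner_single_right]
  simp

lemma inner_emb_en1 (n : ℕ) (x : EuclideanSpace ℝ (Fin n)) :
    ⟪emb n x, en1 n⟫ = 0 := by
  rw [inner_en1, emb_apply_last]

lemma norm_sq_u (n : ℕ) (x : EuclideanSpace ℝ (Fin n)) :
    ‖emb n x + en1 n‖^2 = ‖emb n x‖^2 + 1 := by
  rw [norm_add_sq_real, inner_emb_en1, norm_en1]; ring

lemma hu_ne (n : ℕ) (x : EuclideanSpace ℝ (Fin n)) : ‖emb n x + en1 n‖^2 ≠ 0 := by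
  rw [norm_sq_u]; positivity

lemma norm_cayley (n : ℕ) (x : EuclideanSpace ℝ (Fin n)) : ‖cayley n x‖ = 1 := by
  have hc := hu_ne n x
  have h1 : ⟪en1 n, emb n x + en1 n⟫ = 1 := by
    rw [inner_add_right, real_inner_comm, inner_emb_en1, real_inner_self_eq_norm_sq, norm_en1]
    ring
  have hsq : ‖cayley n x‖^2 = 1 := by
    rw [cayley, norm_sub_sq_real, norm_en1, real_inner_smul_right, h1, norm_smul, mul_pow,
      Real.norm_eq_abs, sq_abs]
    field_simp
    ring
  rw [← Real.sqrt_sq (norm_nonneg (cayley n x)), hsq, Real.sqrt_one]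

lemma cayley_ne (n : ℕ) (x : EuclideanSpace ℝ (Fin n)) : cayley n x ≠ en1 n := by
  intro h
  have hc := hu_ne n x
  have h2 : (2 * (‖emb n x + en1 n‖^2)⁻¹) • (emb n x + en1 n) = 0 := by
    have := sub_eq_zero.mpr h
    rw [cayley] at this
    have : en1 n - (2 * (‖emb n x + en1 n‖^2)⁻¹) • (emb n x + en1 n) - en1 n
        = -((2 * (‖emb n x + en1 n‖^2)⁻¹) • (emb n x + en1 n)) := by abel
    rw [this] at *
    have h3 := sub_eq_zero.mpr h
    rw [cayley] at h3
    have h4 : en1 n - (2 * (‖emb n x + en1 n‖^2)⁻¹) • (emb n x + en1 n) - en1 n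
        = -((2 * (‖emb n x + en1 n‖^2)⁻¹) • (emb n x + en1 n)) := by abel
    rw [h4] at h3
    exact neg_eq_zero.mp h3
  rcases smul_eq_zero.mp h2 with h5 | h5
  · have : (2:ℝ) * (‖emb n x + en1 n‖^2)⁻¹ ≠ 0 := by
      apply mul_ne_zero two_ne_zero (inv_ne_zero hc)
    exact this h5
  · exact hc (by rw [h5]; simp)

lemma cayleyInv_cayley (n : ℕ) (x : EuclideanSpace ℝ (Fin n)) :
    cayleyInv n (cayley n x) = emb n x := by
  have hc := hu_ne n x
  have hsub : cayley n x - en1 n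
      = (-(2 * (‖emb n x + en1 n‖^2)⁻¹)) • (emb n x + en1 n) := by
    rw [cayley]; module
  have hns : ‖cayley n x - en1 n‖^2 = 4 * (‖emb n x + en1 n‖^2)⁻¹ := by
    rw [hsub, norm_smul, mul_pow, Real.norm_eq_abs, sq_abs]
    field_simp
    ring
  rw [cayleyInv, hns, hsub]
  have hc' : ‖emb n x + en1 n‖ ≠ 0 := fun h => hc (by rw [h]; norm_num)
  match_scalars <;> field_simp <;> ring

lemma emb_inj (n : ℕ) : Function.Injective (emb n) := by
  intro a b h
  ext i
  rw [← emb_apply_castSucc n a i, ← emb_apply_castSucc n b i, h]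

lemma norm_sq_w (n : ℕ) (xs : EuclideanSpace ℝ (Fin (n+1))) (hxs : ‖xs‖ = 1) :
    ‖xs - en1 n‖^2 = 2 - 2 * xs (Fin.last n) := by
  rw [norm_sub_sq_real, hxs, inner_en1, norm_en1]; ring

lemma hw_ne (n : ℕ) (xs : EuclideanSpace ℝ (Fin (n+1))) (hxs : ‖xs‖ = 1)
    (hne : xs ≠ en1 n) : ‖xs - en1 n‖^2 ≠ 0 := by
  intro h
  apply hne
  have h1 : ‖xs - en1 n‖ = 0 := by
    have := pow_eq_zero_iff (n := 2) two_ne_zero |>.mp h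
    exact this
  rw [norm_eq_zero, sub_eq_zero] at h1
  exact h1

lemma en1_last (n : ℕ) : en1 n (Fin.last n) = 1 := by
  simp [en1, EuclideanSpace.single_apply]

lemma cayleyInv_last (n : ℕ) (xs : EuclideanSpace ℝ (Fin (n+1))) (hxs : ‖xs‖ = 1)
    (hne : xs ≠ en1 n) : cayleyInv n xs (Fin.last n) = 0 := by
  have hw := norm_sq_w n xs hxs
  have hwne := hw_ne n xs hxs hne
  rw [hw] at hwne
  rw [cayleyInv]
  rw [show ((-en1 n - (2 * (‖xs - en1 n‖^2)⁻¹) • (xs - en1 n)) (Fin.last n) : ℝ)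
      = -(en1 n (Fin.last n)) - (2 * (‖xs - en1 n‖^2)⁻¹) * (xs (Fin.last n) - en1 n (Fin.last n))
      from rfl]
  rw [en1_last, hw]
  have h1 : 1 - xs (Fin.last n) ≠ 0 := fun h => hwne (by linarith)
  field_simp
  ring


/-- The Cayley transformation `C(x) = (e_{n+1}x + 1)(x + e_{n+1})⁻¹` maps `ℝ^n` bijectively
onto `S^n \ {e_{n+1}}`, with inverse `x_s ↦ (-e_{n+1}x_s + 1)(x_s - e_{n+1})⁻¹`; in particular
`‖C(x)‖ = 1` for all `x ∈ ℝ^n` and `C(C⁻¹(x_s)) = x_s` for all `x_s ∈ S^n \ {e_{n+1}}`. -/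
theorem cayley_bijective (n : ℕ) :
    (∀ x : EuclideanSpace ℝ (Fin n),
      ι (Qneg n) (cayley n x) =
        (ι (Qneg n) (en1 n) * ι (Qneg n) (emb n x) + 1) * vecInv n (emb n x + en1 n) ∧
      ‖cayley n x‖ = 1 ∧ cayley n x ≠ en1 n) ∧
    Function.Injective (cayley n) ∧
    (∀ xs : EuclideanSpace ℝ (Fin (n+1)), ‖xs‖ = 1 → xs ≠ en1 n →
      ι (Qneg n) (cayleyInv n xs) =
        (-(ι (Qneg n) (en1 n) * ι (Qneg n) xs) + 1) * vecInv n (xs - en1 n) ∧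
      ∃ y : EuclideanSpace ℝ (Fin n), emb n y = cayleyInv n xs ∧ cayley n y = xs) := by
  refine ⟨fun x => ⟨?_, norm_cayley n x, cayley_ne n x⟩, ?_, fun xs hxs hne => ⟨?_, ?_⟩⟩
  · rw [cayley, vecInv]
    exact cayley_formula_gen n (en1 n) (emb n x) (norm_en1 n) (hu_ne n x)
  · intro a b h
    apply emb_inj n
    rw [← cayleyInv_cayley n a, ← cayleyInv_cayley n b, h]
  · have h := cayley_formula_gen n (-en1 n) xs (by rw [norm_neg, norm_en1])
      (by rw [← sub_eq_add_neg]; exact hw_ne n xs hxs hne)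
    rw [← sub_eq_add_neg] at h
    rw [map_neg, neg_mul] at h
    rw [cayleyInv, vecInv]
    exact h
  · have hwne := hw_ne n xs hxs hne
    refine ⟨(WithLp.toLp 2 (fun i => cayleyInv n xs (Fin.castSucc i)) : EuclideanSpace ℝ (Fin n)), ?_, ?_⟩
    · ext j
      refine Fin.lastCases ?_ ?_ j
      · rw [emb_apply_last, cayleyInv_last n xs hxs hne]
      · intro i; rw [emb_apply_castSucc]
    · have hemb : emb n (WithLp.toLp 2 (fun i => cayleyInv n xs (Fin.castSucc i)) : EuclideanSpace ℝ (Fin n))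
          = cayleyInv n xs := by
        ext j
        refine Fin.lastCases ?_ ?_ j
        · rw [emb_apply_last, cayleyInv_last n xs hxs hne]
        · intro i; rw [emb_apply_castSucc]
      have hy : emb n (WithLp.toLp 2 (fun i => cayleyInv n xs (Fin.castSucc i)) : EuclideanSpace ℝ (Fin n)) + en1 n
          = (-(2 * (‖xs - en1 n‖^2)⁻¹)) • (xs - en1 n) := by
        rw [hemb, cayleyInv]; module
      have hn2 : ‖emb n (WithLp.toLp 2 (fun i => cayleyInv n xs (Fin.castSucc i)) : EuclideanSpace ℝ (Fin n)) + en1 n‖^2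
          = 4 * (‖xs - en1 n‖^2)⁻¹ := by
        rw [hy, norm_smul, mul_pow, Real.norm_eq_abs, sq_abs]
        field_simp
        ring
      rw [cayley, hn2, hy]
      have hw' : ‖xs - en1 n‖ ≠ 0 := fun h => hwne (by rw [h]; norm_num)
      match_scalars <;> field_simp <;> ring
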